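/- Let F be a finite family of compact convex sets in the plane such that every two members of F intersect. Define x_0 to be the lexicographic minimum, over all pairs A, B ∈ F, of lexmax(A ∩ B), where lexmax(K) is the lexicographically maximal point of a compact set K, and let A, B ∈ F attain this minimum. Then for every C ∈ F with C ∩ A ∩ B ≠ ∅, the point x_0 lies in C. -/

import Mathlib

/-- Lexicographic order on `ℝ²`: `x ≤ y` iff `x.1 < y.1`, or `x.1 = y.1` and
`x.2 ≤ y.2`. -/
def lexLE (x y : ℝ × ℝ) : Prop := x.1 < y.1 ∨ (x.1 = y.1 ∧ x.2 ≤ y.2)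

/-- `z` is the lexicographically maximal point of `K`. -/
def IsLexMax (z : ℝ × ℝ) (K : Set (ℝ × ℝ)) : Prop := z ∈ K ∧ ∀ y ∈ K, lexLE y z

noncomputable def ht (r s : ℝ × ℝ) (x : ℝ) : ℝ := r.2 + (x - r.1) / (s.1 - r.1) * (s.2 - r.2)

lemma seg_param (r s : ℝ × ℝ) (t : ℝ) (h0 : 0 ≤ t) (h1 : t ≤ 1) :
    (1 - t) • r + t • s ∈ segment ℝ r s :=
  ⟨1 - t, t, by linarith, h0, by ring, rfl⟩

lemma smul_add_pair (r s : ℝ × ℝ) (t : ℝ) :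
    (1 - t) • r + t • s = ((1 - t) * r.1 + t * s.1, (1 - t) * r.2 + t * s.2) := by
  simp [Prod.ext_iff, Prod.smul_def, smul_eq_mul]

lemma ht_mem (r s : ℝ × ℝ) (hrs : r.1 < s.1) {x : ℝ} (h1 : r.1 ≤ x) (h2 : x ≤ s.1) :
    (x, ht r s x) ∈ segment ℝ r s := by
  have hne : s.1 - r.1 ≠ 0 := by linarith
  have h0 : 0 ≤ (x - r.1) / (s.1 - r.1) := div_nonneg (by linarith) (by linarith)
  have h1' : (x - r.1) / (s.1 - r.1) ≤ 1 := by
    rw [div_le_one (by linarith)]; linarith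
  have hseg := seg_param r s _ h0 h1'
  rw [smul_add_pair] at hseg
  convert hseg using 2
  · field_simp; ring
  · simp only [ht]; field_simp; ring

lemma vert_mem {r s : ℝ × ℝ} (h1 : r.1 = s.1) {c : ℝ} (h2 : r.2 ≤ c) (h3 : c ≤ s.2) :
    (r.1, c) ∈ segment ℝ r s := by
  rcases eq_or_lt_of_le (h2.trans h3) with he | hlt
  · have hc : c = r.2 := le_antisymm (he ▸ h3) h2
    have : (r.1, c) = r := by rw [hc]
    rw [this]; exact left_mem_segment ℝ r s
  · have hne : s.2 - r.2 ≠ 0 := by linarith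
    have h0 : 0 ≤ (c - r.2) / (s.2 - r.2) := div_nonneg (by linarith) (by linarith)
    have h1' : (c - r.2) / (s.2 - r.2) ≤ 1 := by
      rw [div_le_one (by linarith)]; linarith
    have hseg := seg_param r s _ h0 h1'
    rw [smul_add_pair] at hseg
    convert hseg using 2
    · rw [h1]; field_simp; ring
    · field_simp; ring

lemma exists_lexMax {K : Set (ℝ × ℝ)} (hK : IsCompact K) (hne : K.Nonempty) :
    ∃ z, IsLexMax z K := by
  obtain ⟨z1, hz1K, hz1⟩ := hK.exists_isMaxOn hne continuous_fst.continuousOn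
  have hK' : IsCompact (K ∩ {p : ℝ × ℝ | p.1 = z1.1}) :=
    hK.inter_right (isClosed_eq continuous_fst continuous_const)
  obtain ⟨z, hzK', hz⟩ := hK'.exists_isMaxOn ⟨z1, hz1K, rfl⟩ continuous_snd.continuousOn
  refine ⟨z, hzK'.1, fun y hy => ?_⟩
  have hy1 : y.1 ≤ z1.1 := hz1 hy
  have hz1' : z.1 = z1.1 := hzK'.2
  rcases lt_or_eq_of_le (hz1' ▸ hy1 : y.1 ≤ z.1) with h | h
  · exact Or.inl h
  · have hyK' : y ∈ K ∩ {p : ℝ × ℝ | p.1 = z1.1} := ⟨hy, by simp only [Set.mem_setOf_eq]; rw [h, hz1']⟩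
    exact Or.inr ⟨h, hz hyK'⟩

lemma ht_cont (r s : ℝ × ℝ) : Continuous (ht r s) := by
  unfold ht; fun_prop

lemma ht_left (r s : ℝ × ℝ) : ht r s r.1 = r.2 := by simp [ht]

lemma ht_right (r s : ℝ × ℝ) (h : r.1 < s.1) : ht r s s.1 = s.2 := by
  have hne : s.1 - r.1 ≠ 0 := by linarith
  simp [ht]; field_simp; ring

lemma cross {A B : Set (ℝ × ℝ)} (hA : Convex ℝ A) (hB : Convex ℝ B)
    {r s r' s' : ℝ × ℝ} (hrA : r ∈ A) (hsA : s ∈ A) (hr'B : r' ∈ B) (hs'B : s' ∈ B)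
    (hr1 : r'.1 = r.1) (hrs : r.1 < s.1) (hss' : s.1 ≤ s'.1)
    (hl : r.2 < r'.2) (hr2 : ht r' s' s.1 ≤ s.2) :
    ∃ z : ℝ × ℝ, z ∈ A ∩ B ∧ r.1 < z.1 := by
  have hrs' : r'.1 < s'.1 := by rw [hr1]; exact lt_of_lt_of_le hrs hss'
  set f : ℝ → ℝ := fun x => ht r s x - ht r' s' x with hf
  have hcont : ContinuousOn f (Set.Icc r.1 s.1) :=
    ((ht_cont r s).sub (ht_cont r' s')).continuousOn
  have hfa : f r.1 < 0 := by
    simp only [hf, ht_left]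
    have : ht r' s' r.1 = r'.2 := by rw [← hr1, ht_left]
    rw [this]; linarith
  have hfb : 0 ≤ f s.1 := by
    simp only [hf, ht_right r s hrs]; linarith
  obtain ⟨x, hx, hfx⟩ := intermediate_value_Icc hrs.le hcont ⟨hfa.le, hfb⟩
  have hx1 : r.1 < x := lt_of_le_of_ne hx.1 (fun h => by rw [← h] at hfx; linarith)
  refine ⟨(x, ht r s x), ⟨?_, ?_⟩, hx1⟩
  · exact hA.segment_subset hrA hsA (ht_mem r s hrs hx.1 hx.2)
  · have heq : ht r s x = ht r' s' x := by
      have : f x = 0 := hfx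
      simp only [hf] at this; linarith
    rw [heq]
    exact hB.segment_subset hr'B hs'B
      (ht_mem r' s' hrs' (hr1 ▸ hx.1) (hx.2.trans hss'))

lemma cross2 {A B : Set (ℝ × ℝ)} (hA : Convex ℝ A) (hB : Convex ℝ B)
    {r s r' s' : ℝ × ℝ} (hrA : r ∈ A) (hsA : s ∈ A) (hr'B : r' ∈ B) (hs'B : s' ∈ B)
    (hr1 : r'.1 = r.1) (hrs : r.1 < s.1) (hss' : s.1 ≤ s'.1)
    (hl : r'.2 < r.2) (hr2 : s.2 ≤ ht r' s' s.1) :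
    ∃ z : ℝ × ℝ, z ∈ A ∩ B ∧ r.1 < z.1 := by
  have hrs' : r'.1 < s'.1 := by rw [hr1]; exact lt_of_lt_of_le hrs hss'
  set f : ℝ → ℝ := fun x => ht r' s' x - ht r s x with hf
  have hcont : ContinuousOn f (Set.Icc r.1 s.1) :=
    ((ht_cont r' s').sub (ht_cont r s)).continuousOn
  have hfa : f r.1 < 0 := by
    simp only [hf, ht_left]
    have : ht r' s' r.1 = r'.2 := by rw [← hr1, ht_left]
    rw [this]; linarith
  have hfb : 0 ≤ f s.1 := by
    simp only [hf, ht_right r s hrs]; linarith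
  obtain ⟨x, hx, hfx⟩ := intermediate_value_Icc hrs.le hcont ⟨hfa.le, hfb⟩
  have hx1 : r.1 < x := lt_of_le_of_ne hx.1 (fun h => by rw [← h] at hfx; linarith)
  refine ⟨(x, ht r s x), ⟨?_, ?_⟩, hx1⟩
  · exact hA.segment_subset hrA hsA (ht_mem r s hrs hx.1 hx.2)
  · have heq : ht r s x = ht r' s' x := by
      have : f x = 0 := hfx
      simp only [hf] at this; linarith
    rw [heq]
    exact hB.segment_subset hr'B hs'B
      (ht_mem r' s' hrs' (hr1 ▸ hx.1) (hx.2.trans hss'))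

lemma hard {A B : Set (ℝ × ℝ)} (hA : Convex ℝ A) (hB : Convex ℝ B)
    {x0 p q m m' : ℝ × ℝ}
    (hmax : ∀ z ∈ A ∩ B, lexLE z x0)
    (hx0A : x0 ∈ A) (hx0B : x0 ∈ B)
    (hpA : p ∈ A) (hqB : q ∈ B) (hmA : m ∈ A) (hm'B : m' ∈ B)
    (hp1 : p.1 = x0.1) (hq1 : q.1 = x0.1)
    (hp2 : p.2 < x0.2) (hq2 : q.2 < x0.2)
    (hm1 : x0.1 < m.1) (hmm' : m.1 ≤ m'.1) : False := by
  have hm'1 : x0.1 < m'.1 := lt_of_lt_of_le hm1 hmm'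
  have nolex : ∀ z : ℝ × ℝ, z ∈ A ∩ B → x0.1 < z.1 → False := by
    intro z hz h
    rcases hmax z hz with h' | ⟨h', _⟩ <;> linarith
  have step1 : m.2 < ht x0 m' m.1 := by
    by_contra h
    push_neg at h
    obtain ⟨z, hz, hz1⟩ := cross hA hB hpA hmA hx0B hm'B hp1.symm
      (by rw [hp1]; exact hm1) hmm' hp2 h
    exact nolex z hz (hp1 ▸ hz1)
  have step2 : ht q m' m.1 < m.2 := by
    by_contra h
    push_neg at h
    obtain ⟨z, hz, hz1⟩ := cross2 hA hB hx0A hmA hqB hm'B hq1 hm1 hmm' hq2 h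
    exact nolex z hz hz1
  -- m lies in the triangle conv{x0, q, m'} ⊆ B
  have htop : (m.1, ht x0 m' m.1) ∈ B :=
    hB.segment_subset hx0B hm'B (ht_mem x0 m' hm'1 hm1.le hmm')
  have hbot : (m.1, ht q m' m.1) ∈ B :=
    hB.segment_subset hqB hm'B (ht_mem q m' (by rw [hq1]; exact hm'1) (by rw [hq1]; exact hm1.le) hmm')
  have hmB : m ∈ B := by
    have := vert_mem (r := (m.1, ht q m' m.1)) (s := (m.1, ht x0 m' m.1)) rfl
      (c := m.2) step2.le step1.le
    have hm : ((m.1, ht q m' m.1).1, m.2) = m := by simp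
    rw [hm] at this
    exact hB.segment_subset hbot htop this
  exact nolex m ⟨hmA, hmB⟩ hm1

/-- Case (1) of the Montejano–Soberón lemma for `d = 2`: if `x₀` is the
lexicographic minimum over pairs `A, B ∈ F` of `lexmax(A ∩ B)`, attained at the
pair `(A, B) = (F a, F b)`, then every member of `F` meeting `A ∩ B`
contains `x₀`. -/
theorem stmt6 (n : ℕ) (F : Fin n → Set (ℝ × ℝ))
    (hcomp : ∀ i, IsCompact (F i)) (hconv : ∀ i, Convex ℝ (F i))
    (hint : ∀ i j, (F i ∩ F j).Nonempty)
    (a b : Fin n) (x0 : ℝ × ℝ) (hmax : IsLexMax x0 (F a ∩ F b))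
    (hmin : ∀ i j : Fin n, ∀ z : ℝ × ℝ, IsLexMax z (F i ∩ F j) → lexLE x0 z)
    (c : Fin n) (hc : (F c ∩ (F a ∩ F b)).Nonempty) :
    x0 ∈ F c := by
  obtain ⟨w, hwC, hwA, hwB⟩ := hc
  have hx0A : x0 ∈ F a := hmax.1.1
  have hx0B : x0 ∈ F b := hmax.1.2
  have hmax' : ∀ z ∈ F a ∩ F b, lexLE z x0 := hmax.2
  have hmax'' : ∀ z ∈ F b ∩ F a, lexLE z x0 := fun z hz => hmax.2 z ⟨hz.2, hz.1⟩
  have hwx : lexLE w x0 := hmax.2 w ⟨hwA, hwB⟩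
  have hw1 : w.1 ≤ x0.1 := by rcases hwx with h | ⟨h, _⟩ <;> linarith
  obtain ⟨m, hm⟩ := exists_lexMax ((hcomp a).inter_right (hcomp c).isClosed) (hint a c)
  obtain ⟨m', hm'⟩ := exists_lexMax ((hcomp b).inter_right (hcomp c).isClosed) (hint b c)
  have hxm : lexLE x0 m := hmin a c m hm
  have hxm' : lexLE x0 m' := hmin b c m' hm'
  have hmA : m ∈ F a := hm.1.1
  have hmC : m ∈ F c := hm.1.2
  have hm'B : m' ∈ F b := hm'.1.1
  have hm'C : m' ∈ F c := hm'.1.2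
  -- key vertical lemma
  have key : ∀ u v : ℝ × ℝ, u ∈ F a → v ∈ F b → u.1 = x0.1 → v.1 = x0.1 →
      x0.2 ≤ u.2 → x0.2 ≤ v.2 → u = x0 ∨ v = x0 := by
    intro u v huA hvB hu1 hv1 hu2 hv2
    set s := min u.2 v.2 with hs
    have hsx : x0.2 ≤ s := le_min hu2 hv2
    have hzA : (x0.1, s) ∈ F a := by
      have := vert_mem (r := x0) (s := u) hu1.symm hsx (min_le_left _ _)
      exact (hconv a).segment_subset hx0A huA this
    have hzB : (x0.1, s) ∈ F b := by
      have := vert_mem (r := x0) (s := v) hv1.symm hsx (min_le_right _ _)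
      exact (hconv b).segment_subset hx0B hvB this
    have hlex := hmax.2 (x0.1, s) ⟨hzA, hzB⟩
    have hsle : s ≤ x0.2 := by
      rcases hlex with h | ⟨_, h⟩
      · simp at h
      · exact h
    have hseq : s = x0.2 := le_antisymm hsle hsx
    rcases le_total u.2 v.2 with h | h
    · left
      have : u.2 = x0.2 := by rw [← hseq, hs, min_eq_left h]
      exact Prod.ext hu1 this
    · right
      have : v.2 = x0.2 := by rw [← hseq, hs, min_eq_right h]
      exact Prod.ext hv1 this
  -- build crossing points of segments [w,m], [w,m'] with the vertical line
  have buildp : ∀ (i : Fin n) (z : ℝ × ℝ), z ∈ F i ∩ F c → w ∈ F i → x0.1 < z.1 →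
      (x0.1, ht w z x0.1) ∈ F i ∩ F c := by
    intro i z hz hwI h
    have hwz : w.1 < z.1 := lt_of_le_of_lt hw1 h
    exact ((hconv i).inter (hconv c)).segment_subset ⟨hwI, hwC⟩ hz
      (ht_mem w z hwz hw1 h.le)
  rcases hxm with h1 | ⟨h1e, h1le⟩
  · -- x0.1 < m.1 : build p
    obtain ⟨hpA, hpC⟩ := buildp a m hm.1 hwA h1
    set p : ℝ × ℝ := (x0.1, ht w m x0.1) with hp
    rcases hxm' with h2 | ⟨h2e, h2le⟩
    · -- x0.1 < m'.1 : build q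
      obtain ⟨hqB, hqC⟩ := buildp b m' hm'.1 hwB h2
      set q : ℝ × ℝ := (x0.1, ht w m' x0.1) with hq
      rcases lt_or_ge p.2 x0.2 with hp2 | hp2 <;> rcases lt_or_ge q.2 x0.2 with hq2 | hq2
      · -- hard case
        exfalso
        rcases le_total m.1 m'.1 with hle | hle
        · exact hard (hconv a) (hconv b) hmax' hx0A hx0B hpA hqB hmA hm'B
            rfl rfl hp2 hq2 h1 hle
        · exact hard (hconv b) (hconv a) hmax'' hx0B hx0A hqB hpA hm'B hmA
            rfl rfl hq2 hp2 h2 hle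
      · -- p below, q above : x0 on vertical segment [p, q] ⊆ F c
        have := vert_mem (r := p) (s := q) rfl hp2.le hq2
        have hx : (p.1, x0.2) = x0 := Prod.ext rfl rfl
        rw [hx] at this
        exact (hconv c).segment_subset hpC hqC this
      · -- q below, p above
        have := vert_mem (r := q) (s := p) rfl hq2.le hp2
        have hx : (q.1, x0.2) = x0 := Prod.ext rfl rfl
        rw [hx] at this
        exact (hconv c).segment_subset hqC hpC this
      · -- both above : key
        rcases key p q hpA hqB rfl rfl hp2 hq2 with h | h
        · exact h ▸ hpC
        · exact h ▸ hqC
    · -- m' on the line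
      rcases lt_or_ge p.2 x0.2 with hp2 | hp2
      · -- x0 on vertical segment [p, m'] ⊆ F c
        have := vert_mem (r := p) (s := m') h2e hp2.le h2le
        have hx : (p.1, x0.2) = x0 := Prod.ext rfl rfl
        rw [hx] at this
        exact (hconv c).segment_subset hpC hm'C this
      · rcases key p m' hpA hm'B rfl h2e.symm hp2 h2le with h | h
        · exact h ▸ hpC
        · exact h ▸ hm'C
  · -- m on the line
    rcases hxm' with h2 | ⟨h2e, h2le⟩
    · -- x0.1 < m'.1 : build q
      obtain ⟨hqB, hqC⟩ := buildp b m' hm'.1 hwB h2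
      set q : ℝ × ℝ := (x0.1, ht w m' x0.1) with hq
      rcases lt_or_ge q.2 x0.2 with hq2 | hq2
      · have := vert_mem (r := q) (s := m) h1e hq2.le h1le
        have hx : (q.1, x0.2) = x0 := Prod.ext rfl rfl
        rw [hx] at this
        exact (hconv c).segment_subset hqC hmC this
      · rcases key m q hmA hqB h1e.symm rfl h1le hq2 with h | h
        · exact h ▸ hmC
        · exact h ▸ hqC
    · rcases key m m' hmA hm'B h1e.symm h2e.symm h1le h2le with h | h
      · exact h ▸ hmC
      · exact h ▸ hm'C
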